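/- Let R be a p-adic ring, and let M, M' be finite projective graded W(R)^⊕-modules of non-negative depth and altitude at most one. The functor M ↦ (M^τ, θ_1(M_1)), sending such a module to the pair consisting of the finite projective W(R)-module M^τ together with its submodule θ_1(M_1), is fully faithful: every W(R)-module homomorphism M^τ → (M')^τ carrying θ_1(M_1) into θ_1'(M_1') is induced by a unique graded W(R)^⊕-module homomorphism M → M'. -/

import Mathlib

open WittVector

/-- A witness that the `ℤ`-graded ring `S` "is" the graded Witt frame ring `W(R)^⊕` of
Lau–Daniels: degreewise additive realizations `ε n : S → W(R)` which are bijective from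
`S₀` onto `W(R)`, from `S₋ₙ` onto `W(R)` (via division by `tⁿ`), and from `Sₙ` (`n ≥ 1`)
onto `I_R = ker w₀`, together with the element `t ∈ S₋₁` and the multiplication rules of
the Witt frame (`v(a)·v(b) = v(ab)` in positive degrees, `W(R)`-module structure in each
degree, `t` acting as the inclusion `I_R ⊆ W(R)` from degree `1` to degree `0` and as
multiplication by `p` in higher degrees), and the frame homomorphisms `σ` and `τ`
matching the Witt Frobenius and the canonical maps. -/
structure WittFrameData (p : ℕ) [Fact p.Prime] (R : Type*) [CommRing R]
    (S : Type*) [CommRing S] (𝒜 : ℤ → AddSubgroup S) [GradedRing 𝒜] where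
  ε : ℤ → S →+ WittVector p R
  bij_zero : Set.BijOn (ε 0) ((𝒜 0 : AddSubgroup S) : Set S) Set.univ
  map_one : ε 0 1 = 1
  map_mul_zero : ∀ x ∈ 𝒜 0, ∀ y ∈ 𝒜 0, ε 0 (x * y) = ε 0 x * ε 0 y
  bij_neg : ∀ n : ℕ, Set.BijOn (ε (-(n : ℤ))) ((𝒜 (-(n : ℤ)) : AddSubgroup S) : Set S) Set.univ
  bij_pos : ∀ n : ℕ, 1 ≤ n → Set.BijOn (ε (n : ℤ)) ((𝒜 (n : ℤ) : AddSubgroup S) : Set S)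
      {w : WittVector p R | constantCoeff w = 0}
  t : S
  t_mem : t ∈ 𝒜 (-1)
  εt : ε (-1) t = 1
  t_mul : ∀ m : ℤ, ∀ x ∈ 𝒜 m, ε (m - 1) (t * x) =
      (if 2 ≤ m then (p : WittVector p R) * ε m x else ε m x)
  smul_zero_deg : ∀ a ∈ 𝒜 0, ∀ (m : ℤ), ∀ x ∈ 𝒜 m, ε m (a * x) = ε 0 a * ε m x
  pos_mul : ∀ (m n : ℕ), 1 ≤ m → 1 ≤ n → ∀ x ∈ 𝒜 (m : ℤ), ∀ y ∈ 𝒜 (n : ℤ),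
      ∀ a b : WittVector p R, ε (m : ℤ) x = verschiebung a → ε (n : ℤ) y = verschiebung b →
        ε ((m : ℤ) + n) (x * y) = verschiebung (a * b)
  σ : S →+* S
  τ : S →+* S
  σ_mem : ∀ s : S, σ s ∈ 𝒜 0
  τ_mem : ∀ s : S, τ s ∈ 𝒜 0
  τ_spec : ∀ m : ℤ, ∀ x ∈ 𝒜 m, ε 0 (τ x) =
      (if 1 ≤ m then (p : WittVector p R) ^ (m.toNat - 1) * ε m x else ε m x)
  σ_spec_zero : ∀ x ∈ 𝒜 0, ε 0 (σ x) = frobenius (ε 0 x)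
  σ_spec_pos : ∀ n : ℕ, 1 ≤ n → ∀ x ∈ 𝒜 (n : ℤ), verschiebung (ε 0 (σ x)) = ε (n : ℤ) x
  σ_spec_neg : ∀ n : ℕ, ∀ x ∈ 𝒜 (-(n : ℤ)),
      ε 0 (σ x) = (p : WittVector p R) ^ n * frobenius (ε (-(n : ℤ)) x)

/-- The degree-zero part `S₀` of a graded ring, as a subring. -/
def gradeZero {S : Type*} [CommRing S] (𝒜 : ℤ → AddSubgroup S) [GradedRing 𝒜] :
    Subring S where
  carrier := 𝒜 0
  mul_mem' := fun ha hb => by simpa using SetLike.mul_mem_graded ha hb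
  one_mem' := SetLike.one_mem_graded 𝒜
  add_mem' := fun ha hb => add_mem ha hb
  zero_mem' := zero_mem _
  neg_mem' := fun ha => neg_mem ha

section Aux
open DirectSum
variable {p : ℕ} [Fact p.Prime] {R : Type} [CommRing R]
variable {S : Type} [CommRing S] {𝒜 : ℤ → AddSubgroup S} [GradedRing 𝒜]
variable (W : WittFrameData p R S 𝒜)

lemma eps_injOn (n : ℤ) : Set.InjOn (W.ε n) ((𝒜 n : AddSubgroup S) : Set S) := by
  rcases le_or_gt n 0 with h | h
  · have hn : n = -(((-n).toNat : ℕ) : ℤ) := by omega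
    rw [hn]; exact (W.bij_neg _).injOn
  · have hn : n = ((n.toNat : ℕ) : ℤ) := by omega
    rw [hn]; exact (W.bij_pos n.toNat (by omega)).injOn

lemma eps_eq_zero {n : ℤ} {x : S} (hx : x ∈ 𝒜 n) (h : W.ε n x = 0) : x = 0 := by
  have h0 : (0 : S) ∈ 𝒜 n := zero_mem _
  exact eps_injOn W n hx h0 (by simpa using h)

lemma t_mul_mem {m : ℤ} {x : S} (hx : x ∈ 𝒜 m) : W.t * x ∈ 𝒜 (m - 1) := by
  have := SetLike.mul_mem_graded W.t_mem hx
  have e : (-1 : ℤ) + m = m - 1 := by ring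
  rwa [e] at this

lemma t_mul_eps {m : ℤ} (hm : m ≤ 1) {x : S} (hx : x ∈ 𝒜 m) :
    W.ε (m - 1) (W.t * x) = W.ε m x := by
  have := W.t_mul m x hx
  rwa [if_neg (by omega)] at this

lemma t_mul_inj {m : ℤ} (hm : m ≤ 1) {x : S} (hx : x ∈ 𝒜 m) (h : W.t * x = 0) : x = 0 := by
  apply eps_eq_zero W hx
  have := t_mul_eps W hm hx
  rw [h, map_zero] at this
  exact this.symm

lemma t_mul_surj {m : ℤ} (hm : m ≤ -1) {x : S} (hx : x ∈ 𝒜 m) :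
    ∃ y ∈ 𝒜 (m + 1), W.t * y = x := by
  have hb := W.bij_neg ((-(m+1)).toNat)
  have e : -(((-(m+1)).toNat : ℕ) : ℤ) = m + 1 := by omega
  rw [e] at hb
  obtain ⟨y, hy, hyx⟩ := hb.surjOn (Set.mem_univ (W.ε m x))
  refine ⟨y, hy, ?_⟩
  have hty : W.t * y ∈ 𝒜 m := by
    have := t_mul_mem W hy; rwa [show m + 1 - 1 = m by ring] at this
  apply eps_injOn W m hty hx
  have := t_mul_eps W (by omega) hy
  rw [show m + 1 - 1 = m by ring] at this
  rw [this, hyx]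

lemma t_pow_mem (k : ℕ) : W.t ^ k ∈ 𝒜 (-(k : ℤ)) := by
  induction k with
  | zero => simpa using SetLike.one_mem_graded 𝒜
  | succ k ih =>
      have := SetLike.mul_mem_graded W.t_mem ih
      have e : (-1 : ℤ) + -(k : ℤ) = -((k+1 : ℕ) : ℤ) := by push_cast; ring
      rw [e] at this
      rwa [pow_succ, mul_comm]

lemma decompose_mul_left {k : ℤ} {a : S} (ha : a ∈ 𝒜 k) (s : S) (n : ℤ) :
    ((decompose 𝒜 (a * s)) (k + n) : S) = a * ((decompose 𝒜 s) n : S) := by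
  induction s using DirectSum.Decomposition.inductionOn 𝒜 with
  | zero => simp
  | @homogeneous m x =>
      rcases eq_or_ne (m : ℤ) n with rfl | hne
      · rw [decompose_of_mem_same 𝒜 (x := (x : S)) x.2,
          decompose_of_mem_same 𝒜 (SetLike.mul_mem_graded ha x.2)]
      · rw [decompose_of_mem_ne 𝒜 (x := (x : S)) x.2 hne,
          decompose_of_mem_ne 𝒜 (SetLike.mul_mem_graded ha x.2) (by omega), mul_zero]
  | add x y hx hy =>
      rw [mul_add, decompose_add, DirectSum.add_apply, AddSubgroup.coe_add, hx, hy, decompose_add,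
        DirectSum.add_apply, AddSubgroup.coe_add, mul_add]

end Aux

section Aux2
open DirectSum
variable {p : ℕ} [Fact p.Prime] {R : Type} [CommRing R]
variable {S : Type} [CommRing S] {𝒜 : ℤ → AddSubgroup S} [GradedRing 𝒜]
variable (W : WittFrameData p R S 𝒜)

lemma gz_smul (a : gradeZero 𝒜) (s : S) : a • s = (a : S) * s := rfl

lemma gz_mem (a : gradeZero 𝒜) : (a : S) ∈ 𝒜 0 := a.2

/-- degree-n piece of S as a module over the degree-zero subring -/
def gradePiece (n : ℤ) : Submodule (gradeZero 𝒜) S where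
  carrier := 𝒜 n
  add_mem' := fun hx hy => add_mem hx hy
  zero_mem' := zero_mem _
  smul_mem' := fun a x hx => by
    have h := SetLike.mul_mem_graded (gz_mem a) hx
    rwa [zero_add] at h

lemma mem_gradePiece_iff {n : ℤ} {x : S} : x ∈ gradePiece (𝒜 := 𝒜) n ↔ x ∈ 𝒜 n := Iff.rfl

/-- component projection as an A0-linear map -/
def pieceProj (n : ℤ) : S →ₗ[gradeZero 𝒜] gradePiece (𝒜 := 𝒜) n where
  toFun s := ⟨decompose 𝒜 s n, ((decompose 𝒜 s) n).2⟩
  map_add' x y := by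
    ext
    simp [decompose_add, DirectSum.add_apply]
  map_smul' a s := by
    ext
    show ((decompose 𝒜 ((a : S) * s)) n : S) = (a : S) * ((decompose 𝒜 s) n : S)
    have h := decompose_mul_left (𝒜 := 𝒜) (gz_mem a) s n
    rwa [zero_add] at h

/-- inclusion-of-component composed with projection, as endomap of S -/
def compProj (n : ℤ) : S →ₗ[gradeZero 𝒜] S :=
  (gradePiece (𝒜 := 𝒜) n).subtype ∘ₗ pieceProj (𝒜 := 𝒜) n

lemma compProj_apply (n : ℤ) (s : S) : compProj (𝒜 := 𝒜) n s = ((decompose 𝒜 s) n : S) := rfl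

lemma compProj_idem (n : ℤ) :
    (compProj (𝒜 := 𝒜) n) ∘ₗ (compProj (𝒜 := 𝒜) n) = compProj (𝒜 := 𝒜) n := by
  refine LinearMap.ext fun s => ?_
  simp only [LinearMap.comp_apply, compProj_apply]
  exact decompose_of_mem_same 𝒜 ((decompose 𝒜 s) n).2

/-- multiplication by t as an A0-linear map between graded pieces -/
def tMulPiece (n : ℤ) : gradePiece (𝒜 := 𝒜) n →ₗ[gradeZero 𝒜] gradePiece (𝒜 := 𝒜) (n - 1) where
  toFun x := ⟨W.t * x, t_mul_mem W x.2⟩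
  map_add' x y := by ext; show W.t * ((x : S) + y) = _; rw [mul_add]; rfl
  map_smul' a x := by
    ext
    show W.t * ((a : S) * x) = (a : S) * (W.t * x)
    ring

/-- mult by t on S as an A0-linear map -/
def tMulS : S →ₗ[gradeZero 𝒜] S where
  toFun x := W.t * x
  map_add' x y := mul_add _ _ _
  map_smul' a x := by show W.t * ((a : S) * x) = (a : S) * (W.t * x); ring

section Tensor
variable (N : Type) [AddCommGroup N] [Module (gradeZero 𝒜) N]

lemma tsmul_tensor (u : TensorProduct (gradeZero 𝒜) S N) :
    W.t • u = LinearMap.rTensor N (tMulS (𝒜 := 𝒜) W) u := by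
  induction u using TensorProduct.induction_on with
  | zero => simp
  | tmul s l =>
      rw [LinearMap.rTensor_tmul, TensorProduct.smul_tmul']
      rfl
  | add x y hx hy => rw [smul_add, map_add, hx, hy]

lemma key_tensor [Module.Flat (gradeZero 𝒜) N] {n : ℤ} (hn : n ≤ 1)
    (u : TensorProduct (gradeZero 𝒜) S N)
    (hu : LinearMap.rTensor N (compProj (𝒜 := 𝒜) n) u = u)
    (htu : W.t • u = 0) : u = 0 := by
  have huv : LinearMap.rTensor N ((gradePiece (𝒜 := 𝒜) n).subtype)
      (LinearMap.rTensor N (pieceProj (𝒜 := 𝒜) n) u) = u := by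
    rw [← LinearMap.comp_apply, ← LinearMap.rTensor_comp]
    exact hu
  have hcomm : (tMulS (𝒜 := 𝒜) W) ∘ₗ (gradePiece (𝒜 := 𝒜) n).subtype =
      (gradePiece (𝒜 := 𝒜) (n-1)).subtype ∘ₗ (tMulPiece (𝒜 := 𝒜) W n) := by
    refine LinearMap.ext fun x => rfl
  have h2 : LinearMap.rTensor N ((gradePiece (𝒜 := 𝒜) (n-1)).subtype)
      (LinearMap.rTensor N (tMulPiece (𝒜 := 𝒜) W n)
        (LinearMap.rTensor N (pieceProj (𝒜 := 𝒜) n) u)) = 0 := by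
    rw [← LinearMap.comp_apply, ← LinearMap.rTensor_comp, ← hcomm, LinearMap.rTensor_comp,
      LinearMap.comp_apply, huv, ← tsmul_tensor, htu]
  have hιm_inj : Function.Injective
      (LinearMap.rTensor N ((gradePiece (𝒜 := 𝒜) (n-1)).subtype)) := by
    apply Function.LeftInverse.injective
      (g := LinearMap.rTensor N (pieceProj (𝒜 := 𝒜) (n-1)))
    intro w
    rw [← LinearMap.comp_apply, ← LinearMap.rTensor_comp]
    have hcp : (pieceProj (𝒜 := 𝒜) (n-1)) ∘ₗ (gradePiece (𝒜 := 𝒜) (n-1)).subtype =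
        LinearMap.id := by
      refine LinearMap.ext fun x => Subtype.ext ?_
      exact decompose_of_mem_same 𝒜 x.2
    rw [hcp, LinearMap.rTensor_id, LinearMap.id_apply]
  have h3 : LinearMap.rTensor N (tMulPiece (𝒜 := 𝒜) W n)
      (LinearMap.rTensor N (pieceProj (𝒜 := 𝒜) n) u) = 0 := by
    apply hιm_inj; simpa using h2
  have htinj : Function.Injective (tMulPiece (𝒜 := 𝒜) W n) := by
    intro x y hxy
    have hval : W.t * (x : S) = W.t * (y : S) := congrArg Subtype.val hxy
    have hsub : W.t * ((x : S) - y) = 0 := by rw [mul_sub, hval, sub_self]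
    have := t_mul_inj W hn (sub_mem x.2 y.2) hsub
    exact Subtype.ext (sub_eq_zero.mp this)
  have h4 : LinearMap.rTensor N (pieceProj (𝒜 := 𝒜) n) u = 0 :=
    Module.Flat.rTensor_preserves_injective_linearMap _ htinj (by simpa using h3)
  rw [← huv, h4, map_zero]
end Tensor
end Aux2

section Aux3
open DirectSum
variable {p : ℕ} [Fact p.Prime] {R : Type} [CommRing R]
variable {S : Type} [CommRing S] {𝒜 : ℤ → AddSubgroup S} [GradedRing 𝒜]
variable (W : WittFrameData p R S 𝒜)
variable {M : Type} [AddCommGroup M] [Module S M] (ℳ : ℤ → AddSubgroup M)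
  [DirectSum.Decomposition ℳ]

/-- component of a homogeneous-scalar multiple -/
lemma decompose_smul_homog
    (hsmul : ∀ (i j : ℤ), ∀ s ∈ 𝒜 i, ∀ x ∈ ℳ j, s • x ∈ ℳ (i + j))
    {k : ℤ} {a : S} (ha : a ∈ 𝒜 k) (x : M) (n : ℤ) :
    ((decompose ℳ (a • x)) (k + n) : M) = a • ((decompose ℳ x) n : M) := by
  induction x using DirectSum.Decomposition.inductionOn ℳ with
  | zero => simp
  | @homogeneous m y =>
      rcases eq_or_ne (m : ℤ) n with rfl | hne
      · rw [decompose_of_mem_same ℳ (x := (y : M)) y.2,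
          decompose_of_mem_same ℳ (hsmul _ _ _ ha _ y.2)]
      · rw [decompose_of_mem_ne ℳ (x := (y : M)) y.2 hne,
          decompose_of_mem_ne ℳ (hsmul _ _ _ ha _ y.2) (by omega), smul_zero]
  | add y z hy hz =>
      rw [smul_add, decompose_add, DirectSum.add_apply, AddSubgroup.coe_add, hy, hz, decompose_add,
        DirectSum.add_apply, AddSubgroup.coe_add, smul_add]

/-- component of a general-scalar multiple of a homogeneous element -/
lemma decompose_smul_homog_right
    (hsmul : ∀ (i j : ℤ), ∀ s ∈ 𝒜 i, ∀ x ∈ ℳ j, s • x ∈ ℳ (i + j))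
    {j : ℤ} {x : M} (hx : x ∈ ℳ j) (s : S) (n : ℤ) :
    ((decompose ℳ (s • x)) n : M) = ((decompose 𝒜 s) (n - j) : S) • x := by
  induction s using DirectSum.Decomposition.inductionOn 𝒜 with
  | zero => simp
  | @homogeneous k a =>
      rcases eq_or_ne (k : ℤ) (n - j) with hk | hne
      · have h1 : (a : S) • x ∈ ℳ n := by
          have := hsmul _ _ _ a.2 _ hx; rwa [show (k : ℤ) + j = n by omega] at this
        rw [decompose_of_mem_same ℳ h1, decompose_of_mem_same 𝒜 (x := (a : S)) (hk ▸ a.2)]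
      · have h1 : (a : S) • x ∈ ℳ (k + j) := hsmul _ _ _ a.2 _ hx
        rw [decompose_of_mem_ne ℳ h1 (by omega),
          decompose_of_mem_ne 𝒜 (x := (a : S)) a.2 hne, zero_smul]
  | add a b ha hb =>
      rw [add_smul, decompose_add, DirectSum.add_apply, AddSubgroup.coe_add, ha, hb, decompose_add,
        DirectSum.add_apply, AddSubgroup.coe_add, add_smul]

variable (L : ℤ → Submodule (gradeZero 𝒜) M)

set_option maxHeartbeats 1000000
set_option synthInstance.maxHeartbeats 400000

/-- the free-ish cover of M coming from a normal decomposition -/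
noncomputable def piF :
    (TensorProduct (gradeZero 𝒜) S (L 0) × TensorProduct (gradeZero 𝒜) S (L 1)) →ₗ[S] M :=
  LinearMap.coprod (LinearMap.liftBaseChange S (L 0).subtype)
    (LinearMap.liftBaseChange S (L 1).subtype)

/-- the degree-n projection on the cover, as a bare function -/
noncomputable def QF (n : ℤ)
    (u : TensorProduct (gradeZero 𝒜) S (L 0) × TensorProduct (gradeZero 𝒜) S (L 1)) :
    TensorProduct (gradeZero 𝒜) S (L 0) × TensorProduct (gradeZero 𝒜) S (L 1) :=
  (LinearMap.rTensor (L 0) (compProj (𝒜 := 𝒜) n) u.1,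
   LinearMap.rTensor (L 1) (compProj (𝒜 := 𝒜) (n - 1)) u.2)

lemma piF_apply (a : TensorProduct (gradeZero 𝒜) S (L 0))
    (b : TensorProduct (gradeZero 𝒜) S (L 1)) :
    piF (𝒜 := 𝒜) L (a, b) = LinearMap.liftBaseChange S (L 0).subtype a +
      LinearMap.liftBaseChange S (L 1).subtype b := rfl

lemma piF_QF
    (hsmul : ∀ (i j : ℤ), ∀ s ∈ 𝒜 i, ∀ x ∈ ℳ j, s • x ∈ ℳ (i + j))
    (hL0 : (L 0 : Set M) ⊆ (ℳ 0 : AddSubgroup M))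
    (hL1 : (L 1 : Set M) ⊆ (ℳ 1 : AddSubgroup M)) (n : ℤ) (u) :
    piF (𝒜 := 𝒜) L (QF (𝒜 := 𝒜) L n u) = ((decompose ℳ (piF (𝒜 := 𝒜) L u)) n : M) := by
  obtain ⟨u0, u1⟩ := u
  have h0 : ∀ v0 : TensorProduct (gradeZero 𝒜) S (L 0),
      LinearMap.liftBaseChange S (L 0).subtype
          (LinearMap.rTensor (L 0) (compProj (𝒜 := 𝒜) n) v0) =
        ((decompose ℳ (LinearMap.liftBaseChange S (L 0).subtype v0)) n : M) := by
    intro v0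
    induction v0 using TensorProduct.induction_on with
    | zero => simp
    | tmul s l =>
        rw [LinearMap.rTensor_tmul, LinearMap.liftBaseChange_tmul,
          LinearMap.liftBaseChange_tmul]
        have := decompose_smul_homog_right (𝒜 := 𝒜) ℳ hsmul (hL0 l.2) s n
        rw [Submodule.subtype_apply, this, sub_zero]
        rfl
    | add a b ha hb => rw [map_add, map_add, ha, hb, map_add, decompose_add, DirectSum.add_apply]; rfl
  have h1 : ∀ v1 : TensorProduct (gradeZero 𝒜) S (L 1),
      LinearMap.liftBaseChange S (L 1).subtype
          (LinearMap.rTensor (L 1) (compProj (𝒜 := 𝒜) (n - 1)) v1) =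
        ((decompose ℳ (LinearMap.liftBaseChange S (L 1).subtype v1)) n : M) := by
    intro v1
    induction v1 using TensorProduct.induction_on with
    | zero => simp
    | tmul s l =>
        rw [LinearMap.rTensor_tmul, LinearMap.liftBaseChange_tmul,
          LinearMap.liftBaseChange_tmul]
        have := decompose_smul_homog_right (𝒜 := 𝒜) ℳ hsmul (hL1 l.2) s n
        rw [Submodule.subtype_apply, this]
        rfl
    | add a b ha hb => rw [map_add, map_add, ha, hb, map_add, decompose_add, DirectSum.add_apply]; rfl
  have hQ : QF (𝒜 := 𝒜) L n (u0, u1) =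
      (LinearMap.rTensor (L 0) (compProj (𝒜 := 𝒜) n) u0,
       LinearMap.rTensor (L 1) (compProj (𝒜 := 𝒜) (n - 1)) u1) := rfl
  rw [hQ, piF_apply, h0, h1, piF_apply, decompose_add, DirectSum.add_apply]
  rfl

lemma rT_t_smul {N : Type} [AddCommGroup N] [Module (gradeZero 𝒜) N] (n : ℤ)
    (u : TensorProduct (gradeZero 𝒜) S N) :
    LinearMap.rTensor N (compProj (𝒜 := 𝒜) (n - 1)) (W.t • u) =
      W.t • LinearMap.rTensor N (compProj (𝒜 := 𝒜) n) u := by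
  rw [tsmul_tensor (𝒜 := 𝒜) W, tsmul_tensor (𝒜 := 𝒜) W, ← LinearMap.comp_apply,
    ← LinearMap.comp_apply, ← LinearMap.rTensor_comp, ← LinearMap.rTensor_comp]
  congr 1
  apply congrArg
  refine LinearMap.ext fun s => ?_
  show ((decompose 𝒜 (W.t * s)) (n - 1) : S) = W.t * ((decompose 𝒜 s) n : S)
  have := decompose_mul_left (𝒜 := 𝒜) W.t_mem s n
  rwa [show (-1 : ℤ) + n = n - 1 by ring] at this

lemma rT_idem {N : Type} [AddCommGroup N] [Module (gradeZero 𝒜) N] (n : ℤ)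
    (u : TensorProduct (gradeZero 𝒜) S N) :
    LinearMap.rTensor N (compProj (𝒜 := 𝒜) n) (LinearMap.rTensor N (compProj (𝒜 := 𝒜) n) u)
      = LinearMap.rTensor N (compProj (𝒜 := 𝒜) n) u := by
  rw [← LinearMap.comp_apply, ← LinearMap.rTensor_comp, compProj_idem]

lemma piF_surj
    (hLsupp : ∀ i : ℤ, i ≠ 0 → i ≠ 1 → L i = ⊥)
    (hLgen : ∀ n : ℤ, ℳ n =
      AddSubgroup.closure {m : M | ∃ i : ℤ, ∃ s ∈ 𝒜 (n - i), ∃ x ∈ L i, m = s • x}) :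
    Function.Surjective (piF (𝒜 := 𝒜) L (M := M)) := by
  intro m
  induction m using DirectSum.Decomposition.inductionOn ℳ with
  | zero => exact ⟨0, map_zero _⟩
  | @homogeneous n y =>
      have hy : (y : M) ∈ AddSubgroup.closure
          {m : M | ∃ i : ℤ, ∃ s ∈ 𝒜 (n - i), ∃ x ∈ L i, m = s • x} := by
        rw [← hLgen n]; exact y.2
      have hmem : (y : M) ∈ (LinearMap.range (piF (𝒜 := 𝒜) L (M := M))).toAddSubgroup := by
        refine AddSubgroup.closure_le _ |>.mpr ?_ hy
        rintro m ⟨i, s, hs, x, hx, rfl⟩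
        rw [SetLike.mem_coe, Submodule.mem_toAddSubgroup, LinearMap.mem_range]
        rcases eq_or_ne i 0 with rfl | hi0
        · refine ⟨(s ⊗ₜ ⟨x, hx⟩, 0), ?_⟩
          rw [piF_apply, map_zero, add_zero, LinearMap.liftBaseChange_tmul]; rfl
        rcases eq_or_ne i 1 with rfl | hi1
        · refine ⟨(0, s ⊗ₜ ⟨x, hx⟩), ?_⟩
          rw [piF_apply, map_zero, zero_add, LinearMap.liftBaseChange_tmul]; rfl
        · have hx0 : x = 0 := by
            have := hLsupp i hi0 hi1
            simpa [this] using hx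
          exact ⟨0, by rw [map_zero, hx0, smul_zero]⟩
      rw [Submodule.mem_toAddSubgroup, LinearMap.mem_range] at hmem
      exact hmem
  | add a b ha hb =>
      obtain ⟨u, hu⟩ := ha; obtain ⟨v, hv⟩ := hb
      exact ⟨u + v, by rw [map_add, hu, hv]⟩

end Aux3

section Aux4
open DirectSum Pointwise
variable {p : ℕ} [Fact p.Prime] {R : Type} [CommRing R]
variable {S : Type} [CommRing S] {𝒜 : ℤ → AddSubgroup S} [GradedRing 𝒜]
variable (W : WittFrameData p R S 𝒜)
variable {M : Type} [AddCommGroup M] [Module S M] (ℳ : ℤ → AddSubgroup M)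
  [DirectSum.Decomposition ℳ]
variable (L : ℤ → Submodule (gradeZero 𝒜) M)

set_option maxHeartbeats 1000000
set_option synthInstance.maxHeartbeats 400000

/-- injectivity of multiplication by t on the degree-≤1 components -/
lemma t_smul_inj [Module.Projective S M]
    (hsmul : ∀ (i j : ℤ), ∀ s ∈ 𝒜 i, ∀ x ∈ ℳ j, s • x ∈ ℳ (i + j))
    (hL0 : (L 0 : Set M) ⊆ (ℳ 0 : AddSubgroup M))
    (hL1 : (L 1 : Set M) ⊆ (ℳ 1 : AddSubgroup M))
    (hLproj : ∀ i : ℤ, Module.Projective (gradeZero 𝒜) (L i))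
    (hLsupp : ∀ i : ℤ, i ≠ 0 → i ≠ 1 → L i = ⊥)
    (hLgen : ∀ n : ℤ, ℳ n =
      AddSubgroup.closure {m : M | ∃ i : ℤ, ∃ s ∈ 𝒜 (n - i), ∃ x ∈ L i, m = s • x})
    {n : ℤ} (hn : n ≤ 1) {x : M} (hx : x ∈ ℳ n) (h : W.t • x = 0) : x = 0 := by
  haveI := hLproj 0
  haveI := hLproj 1
  obtain ⟨j, hj⟩ := Module.projective_lifting_property (piF (𝒜 := 𝒜) L (M := M))
    LinearMap.id (piF_surj (𝒜 := 𝒜) ℳ L hLsupp hLgen)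
  have hjx : piF (𝒜 := 𝒜) L (j x) = x := by
    have := congrArg (fun f => f x) hj; simpa using this
  -- the degree-n component of j x
  set u := QF (𝒜 := 𝒜) L n (j x) with hu
  have hu1 : u.1 = LinearMap.rTensor (L 0) (compProj (𝒜 := 𝒜) n) (j x).1 := rfl
  have hu2 : u.2 = LinearMap.rTensor (L 1) (compProj (𝒜 := 𝒜) (n - 1)) (j x).2 := rfl
  have hjtx : j (W.t • x) = W.t • j x := by rw [map_smul]
  have htu1 : W.t • u.1 = 0 := by
    rw [hu1, ← rT_t_smul (𝒜 := 𝒜) W n]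
    have : W.t • (j x).1 = (j (W.t • x)).1 := by rw [hjtx]; rfl
    rw [this, h, map_zero]
    simp
  have htu2 : W.t • u.2 = 0 := by
    rw [hu2, ← rT_t_smul (𝒜 := 𝒜) W (n - 1)]
    have : W.t • (j x).2 = (j (W.t • x)).2 := by rw [hjtx]; rfl
    rw [this, h, map_zero]
    simp
  have hu1fix : LinearMap.rTensor (L 0) (compProj (𝒜 := 𝒜) n) u.1 = u.1 := by
    rw [hu1]; exact rT_idem (𝒜 := 𝒜) n _
  have hu2fix : LinearMap.rTensor (L 1) (compProj (𝒜 := 𝒜) (n - 1)) u.2 = u.2 := by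
    rw [hu2]; exact rT_idem (𝒜 := 𝒜) (n - 1) _
  have hu10 : u.1 = 0 := key_tensor (𝒜 := 𝒜) W (L 0) hn u.1 hu1fix htu1
  have hu20 : u.2 = 0 := key_tensor (𝒜 := 𝒜) W (L 1) (by omega) u.2 hu2fix htu2
  have hx2 : x = piF (𝒜 := 𝒜) L u := by
    rw [hu, piF_QF (𝒜 := 𝒜) ℳ L hsmul hL0 hL1 n (j x), hjx,
      decompose_of_mem_same ℳ hx]
  rw [hx2, show u = (u.1, u.2) from rfl, hu10, hu20]
  exact map_zero _

/-- surjectivity of multiplication by t onto negative-degree components -/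
lemma t_smul_surj_neg
    (hsmul : ∀ (i j : ℤ), ∀ s ∈ 𝒜 i, ∀ x ∈ ℳ j, s • x ∈ ℳ (i + j))
    (hL0 : (L 0 : Set M) ⊆ (ℳ 0 : AddSubgroup M))
    (hL1 : (L 1 : Set M) ⊆ (ℳ 1 : AddSubgroup M))
    (hLsupp : ∀ i : ℤ, i ≠ 0 → i ≠ 1 → L i = ⊥)
    (hLgen : ∀ n : ℤ, ℳ n =
      AddSubgroup.closure {m : M | ∃ i : ℤ, ∃ s ∈ 𝒜 (n - i), ∃ x ∈ L i, m = s • x})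
    {n : ℤ} (hn : n ≤ -1) {x : M} (hx : x ∈ ℳ n) :
    ∃ z ∈ ℳ (n + 1), W.t • z = x := by
  let K : AddSubgroup M :=
    { carrier := {m : M | ∃ z ∈ ℳ (n + 1), W.t • z = m}
      zero_mem' := ⟨0, zero_mem _, smul_zero _⟩
      add_mem' := by
        rintro a b ⟨z, hz, hza⟩ ⟨w, hw, hwb⟩
        exact ⟨z + w, add_mem hz hw, by rw [smul_add, hza, hwb]⟩
      neg_mem' := by
        rintro a ⟨z, hz, hza⟩
        exact ⟨-z, neg_mem hz, by rw [smul_neg, hza]⟩ }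
  have hxK : x ∈ K := by
    have hy : x ∈ AddSubgroup.closure
        {m : M | ∃ i : ℤ, ∃ s ∈ 𝒜 (n - i), ∃ x ∈ L i, m = s • x} := by
      rw [← hLgen n]; exact hx
    refine AddSubgroup.closure_le K |>.mpr ?_ hy
    rintro m ⟨i, s, hs, y, hy', rfl⟩
    rcases eq_or_ne i 0 with rfl | hi0
    · obtain ⟨s', hs', hts⟩ := t_mul_surj W (by omega : n - 0 ≤ -1) hs
      refine ⟨s' • y, ?_, ?_⟩
      · have := hsmul _ _ _ hs' _ (hL0 hy')
        rwa [show n - 0 + 1 + 0 = n + 1 by ring] at this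
      · rw [smul_smul, hts]
    rcases eq_or_ne i 1 with rfl | hi1
    · obtain ⟨s', hs', hts⟩ := t_mul_surj W (by omega : n - 1 ≤ -1) hs
      refine ⟨s' • y, ?_, ?_⟩
      · have := hsmul _ _ _ hs' _ (hL1 hy')
        rwa [show n - 1 + 1 + 1 = n + 1 by ring] at this
      · rw [smul_smul, hts]
    · have hy0 : y = 0 := by
        have := hLsupp i hi0 hi1
        simpa [this] using hy'
      exact ⟨0, zero_mem _, by rw [smul_zero, hy0, smul_zero]⟩
  exact hxK

/-- injectivity of the canonical map from low-degree components to M/(t-1)M -/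
lemma theta_inj [Module.Projective S M]
    (hsmul : ∀ (i j : ℤ), ∀ s ∈ 𝒜 i, ∀ x ∈ ℳ j, s • x ∈ ℳ (i + j))
    (hL0 : (L 0 : Set M) ⊆ (ℳ 0 : AddSubgroup M))
    (hL1 : (L 1 : Set M) ⊆ (ℳ 1 : AddSubgroup M))
    (hLproj : ∀ i : ℤ, Module.Projective (gradeZero 𝒜) (L i))
    (hLsupp : ∀ i : ℤ, i ≠ 0 → i ≠ 1 → L i = ⊥)
    (hLgen : ∀ n : ℤ, ℳ n =
      AddSubgroup.closure {m : M | ∃ i : ℤ, ∃ s ∈ 𝒜 (n - i), ∃ x ∈ L i, m = s • x})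
    {n : ℤ} (hn : n ≤ 1) {x : M} (hx : x ∈ ℳ n)
    (hmem : x ∈ Ideal.span ({W.t - 1} : Set S) • (⊤ : Submodule S M)) : x = 0 := by
  rw [Submodule.ideal_span_singleton_smul] at hmem
  obtain ⟨y, -, hxy⟩ := hmem
  have hxy' : (W.t - 1) • y = x := hxy
  rw [← hxy'] at hx ⊢
  set Y : ℤ → M := fun m => ((decompose ℳ y) m : M) with hY
  have hrel : ∀ m : ℤ, ((decompose ℳ ((W.t - 1) • y)) m : M) = W.t • Y (m + 1) - Y m := by
    intro m
    rw [sub_smul, one_smul, decompose_sub, DirectSum.sub_apply, AddSubgroup.coe_sub]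
    congr 1
    have := decompose_smul_homog (𝒜 := 𝒜) ℳ hsmul W.t_mem y (m + 1)
    rwa [show (-1 : ℤ) + (m + 1) = m by ring] at this
  have hstep : ∀ m : ℤ, m ≠ n → Y m = W.t • Y (m + 1) := by
    intro m hm
    have h1 : ((decompose ℳ ((W.t - 1) • y)) m : M) = 0 := by
      rw [decompose_of_mem_ne ℳ hx (Ne.symm hm)]
    rw [hrel m] at h1
    exact (sub_eq_zero.mp h1).symm
  -- upper bound for support
  classical
  set B : ℕ := (DFinsupp.support (decompose ℳ y)).sup (fun m : ℤ => m.toNat) with hB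
  have hBle : ∀ m : ℤ, m ∈ DFinsupp.support (decompose ℳ y) → m ≤ (B : ℤ) := by
    intro m hm
    calc m ≤ (m.toNat : ℤ) := Int.self_le_toNat m
    _ ≤ (B : ℤ) := by exact_mod_cast Finset.le_sup (f := fun m : ℤ => m.toNat) hm
  have hout : ∀ m : ℤ, m ∉ DFinsupp.support (decompose ℳ y) → Y m = 0 := by
    intro m hm
    rw [DFinsupp.notMem_support_iff] at hm
    simp [hY, hm]
  have hup : ∀ k : ℕ, ∀ m : ℤ, n < m → (B : ℤ) + 1 - k ≤ m → Y m = 0 := by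
    intro k
    induction k with
    | zero =>
        intro m _ hm
        refine hout m fun hmem => ?_
        have := hBle m hmem
        omega
    | succ k ih =>
        intro m hnm hm
        rcases le_or_gt ((B : ℤ) + 1 - k) m with h' | h'
        · exact ih m hnm h'
        · have h2 : Y (m + 1) = 0 := ih (m + 1) (by omega) (by omega)
          rw [hstep m (by omega), h2, smul_zero]
  have hupall : ∀ m : ℤ, n < m → Y m = 0 := by
    intro m hnm
    exact hup ((B : ℤ) + 1 - m).toNat m hnm (by omega)
  have hxn : (W.t - 1) • y = - Y n := by
    have h1 : ((decompose ℳ ((W.t - 1) • y)) n : M) = (W.t - 1) • y :=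
      decompose_of_mem_same ℳ hx
    rw [hrel n, hupall (n + 1) (by omega), smul_zero, zero_sub] at h1
    exact h1.symm
  -- downward recursion
  have hdown : ∀ k : ℕ, Y (n - k) = W.t ^ k • Y n := by
    intro k
    induction k with
    | zero => simp
    | succ k ih =>
        have h1 : Y (n - (k + 1 : ℕ)) = W.t • Y (n - (k + 1 : ℕ) + 1) :=
          hstep _ (by push_cast; omega)
        rw [h1, show (n - (k + 1 : ℕ) + 1) = n - (k : ℕ) by push_cast; ring, ih,
          smul_smul, ← pow_succ']
  -- lower bound for support
  set C : ℕ := (DFinsupp.support (decompose ℳ y)).sup (fun m : ℤ => (-m).toNat) with hC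
  have hCle : ∀ m : ℤ, m ∈ DFinsupp.support (decompose ℳ y) → -(C : ℤ) ≤ m := by
    intro m hm
    have : ((-m).toNat : ℤ) ≤ (C : ℤ) := by
      exact_mod_cast Finset.le_sup (f := fun m : ℤ => (-m).toNat) hm
    omega
  have hk0 : Y (n - ((n + C + 1).toNat : ℕ)) = 0 := by
    refine hout _ fun hmem => ?_
    have := hCle _ hmem
    omega
  have hYn0 : ∀ k : ℕ, W.t ^ k • Y n = 0 → Y n = 0 := by
    intro k
    induction k with
    | zero => intro h0; simpa using h0
    | succ k ih =>
        intro h0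
        have hmem : W.t ^ k • Y n ∈ ℳ (-(k : ℤ) + n) :=
          hsmul _ _ _ (t_pow_mem W k) _ (decompose ℳ y n).2
        have h1 : W.t • (W.t ^ k • Y n) = 0 := by
          rw [smul_smul, ← pow_succ', h0]
        have h2 : W.t ^ k • Y n = 0 :=
          t_smul_inj (𝒜 := 𝒜) W ℳ L hsmul hL0 hL1 hLproj hLsupp hLgen
            (by omega : -(k : ℤ) + n ≤ 1) hmem h1
        exact ih h2
  have hfin : Y n = 0 := by
    apply hYn0 ((n + C + 1).toNat)
    rw [← hdown, hk0]
  rw [hxn, hfin, neg_zero]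

/-- surjectivity of θ₀ : every element of the quotient comes from degree 0 -/
lemma theta0_surj
    (hsmul : ∀ (i j : ℤ), ∀ s ∈ 𝒜 i, ∀ x ∈ ℳ j, s • x ∈ ℳ (i + j))
    (hL0 : (L 0 : Set M) ⊆ (ℳ 0 : AddSubgroup M))
    (hL1 : (L 1 : Set M) ⊆ (ℳ 1 : AddSubgroup M))
    (hLsupp : ∀ i : ℤ, i ≠ 0 → i ≠ 1 → L i = ⊥)
    (hLgen : ∀ n : ℤ, ℳ n =
      AddSubgroup.closure {m : M | ∃ i : ℤ, ∃ s ∈ 𝒜 (n - i), ∃ x ∈ L i, m = s • x})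
    (m : M) :
    ∃ x ∈ ℳ 0, (Submodule.Quotient.mk x :
      M ⧸ (Ideal.span ({W.t - 1} : Set S) • (⊤ : Submodule S M))) = Submodule.Quotient.mk m := by
  have hmkt : ∀ z : M, (Submodule.Quotient.mk (W.t • z) :
      M ⧸ (Ideal.span ({W.t - 1} : Set S) • (⊤ : Submodule S M))) = Submodule.Quotient.mk z := by
    intro z
    rw [Submodule.Quotient.eq]
    have : W.t • z - z = (W.t - 1) • z := by rw [sub_smul, one_smul]
    rw [this]
    exact Submodule.smul_mem_smul (Ideal.subset_span (Set.mem_singleton _)) trivial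
  have hup : ∀ k : ℕ, ∀ z : M, z ∈ ℳ (k : ℤ) → ∃ x ∈ ℳ 0,
      (Submodule.Quotient.mk x : M ⧸ (Ideal.span ({W.t - 1} : Set S) •
        (⊤ : Submodule S M))) = Submodule.Quotient.mk z := by
    intro k
    induction k with
    | zero => intro z hz; exact ⟨z, hz, rfl⟩
    | succ k ih =>
        intro z hz
        have htz : W.t • z ∈ ℳ (k : ℤ) := by
          have := hsmul _ _ _ W.t_mem _ hz
          rwa [show (-1 : ℤ) + ((k : ℕ) + 1 : ℕ) = (k : ℤ) by push_cast; ring] at this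
        obtain ⟨x, hx0, hxz⟩ := ih (W.t • z) htz
        exact ⟨x, hx0, by rw [hxz, hmkt]⟩
  have hdown : ∀ k : ℕ, ∀ z : M, z ∈ ℳ (-(k : ℤ)) → ∃ x ∈ ℳ 0,
      (Submodule.Quotient.mk x : M ⧸ (Ideal.span ({W.t - 1} : Set S) •
        (⊤ : Submodule S M))) = Submodule.Quotient.mk z := by
    intro k
    induction k with
    | zero => intro z hz; exact ⟨z, hz, rfl⟩
    | succ k ih =>
        intro z hz
        obtain ⟨w, hw, htw⟩ := t_smul_surj_neg (𝒜 := 𝒜) W ℳ L hsmul hL0 hL1 hLsupp hLgen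
          (by push_cast; omega : -((k + 1 : ℕ) : ℤ) ≤ -1) hz
        have hw' : w ∈ ℳ (-(k : ℤ)) := by
          rwa [show -((k + 1 : ℕ) : ℤ) + 1 = -(k : ℤ) by push_cast; ring] at hw
        obtain ⟨x, hx0, hxw⟩ := ih w hw'
        exact ⟨x, hx0, by rw [hxw, ← htw, hmkt]⟩
  induction m using DirectSum.Decomposition.inductionOn ℳ with
  | zero => exact ⟨0, zero_mem _, rfl⟩
  | @homogeneous n z =>
      rcases le_or_gt 0 n with h | h
      · have hz : (z : M) ∈ ℳ ((n.toNat : ℕ) : ℤ) := by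
          rw [show ((n.toNat : ℕ) : ℤ) = n by omega]; exact z.2
        exact hup n.toNat z hz
      · have hz : (z : M) ∈ ℳ (-(((-n).toNat : ℕ) : ℤ)) := by
          rw [show (-(((-n).toNat : ℕ) : ℤ)) = n by omega]; exact z.2
        exact hdown (-n).toNat z hz
  | add a b ha hb =>
      obtain ⟨x, hx0, hxa⟩ := ha
      obtain ⟨x', hx'0, hx'b⟩ := hb
      refine ⟨x + x', add_mem hx0 hx'0, ?_⟩
      rw [Submodule.Quotient.mk_add, Submodule.Quotient.mk_add, hxa, hx'b]
end Aux4

open DirectSum in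
set_option maxHeartbeats 2000000 in
set_option synthInstance.maxHeartbeats 400000 in
/-- Let `R` be a `p`-adic ring and `S = W(R)^⊕` the graded Witt frame
ring.  For finite projective graded `S`-modules `M, M'` of non-negative depth and
altitude at most one (i.e. admitting normal decompositions supported in degrees
`{0,1}`), the functor `M ↦ (M^τ, θ₁(M₁))` — sending `M` to `M^τ = M/(t−1)M` together
with the image of the degree-one part `M₁` — is fully faithful: every `W(R)`-linear
map `M^τ → M'^τ` carrying `θ₁(M₁)` into `θ₁'(M₁')` is induced by a unique graded
homomorphism `M → M'`. -/
theorem stmt_19 (p : ℕ) [Fact p.Prime]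
    (R : Type) [CommRing R] (hR : IsAdicComplete (Ideal.span {(p : R)}) R)
    (S : Type) [CommRing S] (𝒜 : ℤ → AddSubgroup S) [GradedRing 𝒜]
    (W : WittFrameData p R S 𝒜)
    -- M and M', finite projective graded S-modules:
    (M : Type) [AddCommGroup M] [Module S M] (ℳ : ℤ → AddSubgroup M)
    [DirectSum.Decomposition ℳ]
    (hℳsmul : ∀ (i j : ℤ), ∀ s ∈ 𝒜 i, ∀ x ∈ ℳ j, s • x ∈ ℳ (i + j))
    [Module.Finite S M] [Module.Projective S M]
    (M' : Type) [AddCommGroup M'] [Module S M'] (ℳ' : ℤ → AddSubgroup M')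
    [DirectSum.Decomposition ℳ']
    (hℳ'smul : ∀ (i j : ℤ), ∀ s ∈ 𝒜 i, ∀ x ∈ ℳ' j, s • x ∈ ℳ' (i + j))
    [Module.Finite S M'] [Module.Projective S M']
    -- normal decompositions supported in degrees {0, 1} (depth ≥ 0, altitude ≤ 1):
    (L : ℤ → Submodule (gradeZero 𝒜) M)
    (hLsub : ∀ i : ℤ, (L i : Set M) ⊆ (ℳ i : AddSubgroup M))
    (hLfin : ∀ i : ℤ, Module.Finite (gradeZero 𝒜) (L i))
    (hLproj : ∀ i : ℤ, Module.Projective (gradeZero 𝒜) (L i))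
    (hLsupp : ∀ i : ℤ, i ≠ 0 → i ≠ 1 → L i = ⊥)
    (hLgen : ∀ n : ℤ, ℳ n =
      AddSubgroup.closure {m : M | ∃ i : ℤ, ∃ s ∈ 𝒜 (n - i), ∃ x ∈ L i, m = s • x})
    (L' : ℤ → Submodule (gradeZero 𝒜) M')
    (hL'sub : ∀ i : ℤ, (L' i : Set M') ⊆ (ℳ' i : AddSubgroup M'))
    (hL'fin : ∀ i : ℤ, Module.Finite (gradeZero 𝒜) (L' i))
    (hL'proj : ∀ i : ℤ, Module.Projective (gradeZero 𝒜) (L' i))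
    (hL'supp : ∀ i : ℤ, i ≠ 0 → i ≠ 1 → L' i = ⊥)
    (hL'gen : ∀ n : ℤ, ℳ' n =
      AddSubgroup.closure {m : M' | ∃ i : ℤ, ∃ s ∈ 𝒜 (n - i), ∃ x ∈ L' i, m = s • x}) :
    -- full faithfulness of M ↦ (M^τ, θ₁(M₁)):
    ∀ g : (M ⧸ (Ideal.span ({W.t - 1} : Set S) • (⊤ : Submodule S M))) →ₗ[S]
        (M' ⧸ (Ideal.span ({W.t - 1} : Set S) • (⊤ : Submodule S M'))),
      (∀ x ∈ ℳ 1, ∃ y ∈ ℳ' 1, g (Submodule.Quotient.mk x) = Submodule.Quotient.mk y) →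
      ∃! ψ : M →ₗ[S] M',
        (∀ i : ℤ, ∀ x ∈ ℳ i, ψ x ∈ ℳ' i) ∧
        (∀ x : M, (Submodule.Quotient.mk (ψ x) :
            M' ⧸ (Ideal.span ({W.t - 1} : Set S) • (⊤ : Submodule S M'))) =
          g (Submodule.Quotient.mk x)) := by
  classical
  intro g hg
  -- uniqueness of representatives of degree ≤ 1
  have uniq : ∀ (n : ℤ), n ≤ 1 → ∀ y y' : M', y ∈ ℳ' n → y' ∈ ℳ' n →
      (Submodule.Quotient.mk y :
        M' ⧸ (Ideal.span ({W.t - 1} : Set S) • (⊤ : Submodule S M'))) =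
        Submodule.Quotient.mk y' → y = y' := by
    intro n hn y y' hy hy' hq
    have hsub := (Submodule.Quotient.eq _).mp hq
    have h0 := theta_inj (𝒜 := 𝒜) W ℳ' L' hℳ'smul (hL'sub 0) (hL'sub 1) hL'proj hL'supp
      hL'gen hn (sub_mem hy hy') hsub
    exact sub_eq_zero.mp h0
  -- construction of ψ₀ on L 0
  have ex0 : ∀ l : (L 0), ∃ y : M', y ∈ ℳ' 0 ∧
      (Submodule.Quotient.mk y :
        M' ⧸ (Ideal.span ({W.t - 1} : Set S) • (⊤ : Submodule S M'))) =
        g (Submodule.Quotient.mk (l : M)) := by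
    intro l
    obtain ⟨m', hm'⟩ := Submodule.Quotient.mk_surjective _ (g (Submodule.Quotient.mk (l : M)))
    obtain ⟨y, hy, hyq⟩ := theta0_surj (𝒜 := 𝒜) W ℳ' L' hℳ'smul (hL'sub 0) (hL'sub 1)
      hL'supp hL'gen m'
    exact ⟨y, hy, by rw [hyq, hm']⟩
  choose f0 hf0mem hf0q using ex0
  -- construction of ψ₁ on L 1
  have ex1 : ∀ l : (L 1), ∃ y : M', y ∈ ℳ' 1 ∧
      (Submodule.Quotient.mk y :
        M' ⧸ (Ideal.span ({W.t - 1} : Set S) • (⊤ : Submodule S M'))) =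
        g (Submodule.Quotient.mk (l : M)) := by
    intro l
    obtain ⟨y, hy, hyq⟩ := hg (l : M) (hLsub 1 l.2)
    exact ⟨y, hy, hyq.symm⟩
  choose f1 hf1mem hf1q using ex1
  -- linearity of f0 and f1
  have hf0add : ∀ l l' : (L 0), f0 (l + l') = f0 l + f0 l' := by
    intro l l'
    refine uniq 0 (by omega) _ _ (hf0mem _) (add_mem (hf0mem l) (hf0mem l')) ?_
    rw [hf0q, Submodule.Quotient.mk_add, hf0q, hf0q, Submodule.coe_add,
      Submodule.Quotient.mk_add, map_add]
  have hf0smul : ∀ (a : gradeZero 𝒜) (l : (L 0)), f0 (a • l) = (a : S) • f0 l := by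
    intro a l
    have hmem : (a : S) • f0 l ∈ ℳ' 0 := by
      have := hℳ'smul 0 0 (a : S) a.2 _ (hf0mem l)
      rwa [zero_add] at this
    refine uniq 0 (by omega) _ _ (hf0mem _) hmem ?_
    rw [hf0q, show ((a • l : (L 0)) : M) = (a : S) • (l : M) from rfl,
      Submodule.Quotient.mk_smul, map_smul, Submodule.Quotient.mk_smul, hf0q]
  have hf1add : ∀ l l' : (L 1), f1 (l + l') = f1 l + f1 l' := by
    intro l l'
    refine uniq 1 (by omega) _ _ (hf1mem _) (add_mem (hf1mem l) (hf1mem l')) ?_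
    rw [hf1q, Submodule.Quotient.mk_add, hf1q, hf1q, Submodule.coe_add,
      Submodule.Quotient.mk_add, map_add]
  have hf1smul : ∀ (a : gradeZero 𝒜) (l : (L 1)), f1 (a • l) = (a : S) • f1 l := by
    intro a l
    have hmem : (a : S) • f1 l ∈ ℳ' 1 := by
      have := hℳ'smul 0 1 (a : S) a.2 _ (hf1mem l)
      rwa [zero_add] at this
    refine uniq 1 (by omega) _ _ (hf1mem _) hmem ?_
    rw [hf1q, show ((a • l : (L 1)) : M) = (a : S) • (l : M) from rfl,
      Submodule.Quotient.mk_smul, map_smul, Submodule.Quotient.mk_smul, hf1q]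
  let ψ0 : (L 0) →ₗ[gradeZero 𝒜] M' :=
    { toFun := f0, map_add' := hf0add, map_smul' := fun a l => hf0smul a l }
  let ψ1 : (L 1) →ₗ[gradeZero 𝒜] M' :=
    { toFun := f1, map_add' := hf1add, map_smul' := fun a l => hf1smul a l }
  let Φ : (TensorProduct (gradeZero 𝒜) S (L 0) × TensorProduct (gradeZero 𝒜) S (L 1))
      →ₗ[S] M' :=
    LinearMap.coprod (LinearMap.liftBaseChange S ψ0) (LinearMap.liftBaseChange S ψ1)
  obtain ⟨j, hj⟩ := Module.projective_lifting_property (piF (𝒜 := 𝒜) L (M := M))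
    LinearMap.id (piF_surj (𝒜 := 𝒜) ℳ L hLsupp hLgen)
  have hjx : ∀ x : M, piF (𝒜 := 𝒜) L (j x) = x := by
    intro x
    have := congrArg (fun f => f x) hj
    simpa using this
  -- key1 : the quotient compatibility of Φ
  have key1a : ∀ v : TensorProduct (gradeZero 𝒜) S (L 0),
      (Submodule.Quotient.mk (LinearMap.liftBaseChange S ψ0 v) :
        M' ⧸ (Ideal.span ({W.t - 1} : Set S) • (⊤ : Submodule S M'))) =
        g (Submodule.Quotient.mk (LinearMap.liftBaseChange S (L 0).subtype v)) := by
    intro v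
    induction v using TensorProduct.induction_on with
    | zero => simp
    | tmul s l =>
        rw [LinearMap.liftBaseChange_tmul, LinearMap.liftBaseChange_tmul,
          Submodule.subtype_apply, Submodule.Quotient.mk_smul, Submodule.Quotient.mk_smul,
          map_smul]
        exact congrArg (fun c => s • c) (hf0q l)
    | add a b ha hb =>
        rw [map_add, map_add, Submodule.Quotient.mk_add, Submodule.Quotient.mk_add,
          ha, hb, map_add]
  have key1b : ∀ v : TensorProduct (gradeZero 𝒜) S (L 1),
      (Submodule.Quotient.mk (LinearMap.liftBaseChange S ψ1 v) :
        M' ⧸ (Ideal.span ({W.t - 1} : Set S) • (⊤ : Submodule S M'))) =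
        g (Submodule.Quotient.mk (LinearMap.liftBaseChange S (L 1).subtype v)) := by
    intro v
    induction v using TensorProduct.induction_on with
    | zero => simp
    | tmul s l =>
        rw [LinearMap.liftBaseChange_tmul, LinearMap.liftBaseChange_tmul,
          Submodule.subtype_apply, Submodule.Quotient.mk_smul, Submodule.Quotient.mk_smul,
          map_smul]
        exact congrArg (fun c => s • c) (hf1q l)
    | add a b ha hb =>
        rw [map_add, map_add, Submodule.Quotient.mk_add, Submodule.Quotient.mk_add,
          ha, hb, map_add]
  have key1 : ∀ u : (TensorProduct (gradeZero 𝒜) S (L 0) ×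
      TensorProduct (gradeZero 𝒜) S (L 1)),
      (Submodule.Quotient.mk (Φ u) :
        M' ⧸ (Ideal.span ({W.t - 1} : Set S) • (⊤ : Submodule S M'))) =
        g (Submodule.Quotient.mk (piF (𝒜 := 𝒜) L u)) := by
    rintro ⟨u0, u1⟩
    have hΦ : Φ (u0, u1) = LinearMap.liftBaseChange S ψ0 u0 +
        LinearMap.liftBaseChange S ψ1 u1 := rfl
    rw [hΦ, piF_apply, Submodule.Quotient.mk_add, Submodule.Quotient.mk_add, key1a, key1b,
      map_add]
  -- key2 : the grading compatibility of Φ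
  have key2a : ∀ (n : ℤ) (v : TensorProduct (gradeZero 𝒜) S (L 0)),
      ((decompose ℳ' (LinearMap.liftBaseChange S ψ0 v)) n : M') =
        LinearMap.liftBaseChange S ψ0
          (LinearMap.rTensor (L 0) (compProj (𝒜 := 𝒜) n) v) := by
    intro n v
    induction v using TensorProduct.induction_on with
    | zero => simp
    | tmul s l =>
        rw [LinearMap.liftBaseChange_tmul, LinearMap.rTensor_tmul,
          LinearMap.liftBaseChange_tmul]
        have := decompose_smul_homog_right (𝒜 := 𝒜) ℳ' hℳ'smul (hf0mem l) s n
        rw [show (ψ0 l : M') = f0 l from rfl, this, sub_zero]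
        rfl
    | add a b ha hb =>
        rw [map_add, decompose_add, DirectSum.add_apply, AddSubgroup.coe_add, ha, hb, map_add, map_add]
  have key2b : ∀ (n : ℤ) (v : TensorProduct (gradeZero 𝒜) S (L 1)),
      ((decompose ℳ' (LinearMap.liftBaseChange S ψ1 v)) n : M') =
        LinearMap.liftBaseChange S ψ1
          (LinearMap.rTensor (L 1) (compProj (𝒜 := 𝒜) (n - 1)) v) := by
    intro n v
    induction v using TensorProduct.induction_on with
    | zero => simp
    | tmul s l =>
        rw [LinearMap.liftBaseChange_tmul, LinearMap.rTensor_tmul,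
          LinearMap.liftBaseChange_tmul]
        have := decompose_smul_homog_right (𝒜 := 𝒜) ℳ' hℳ'smul (hf1mem l) s n
        rw [show (ψ1 l : M') = f1 l from rfl, this]
        rfl
    | add a b ha hb =>
        rw [map_add, decompose_add, DirectSum.add_apply, AddSubgroup.coe_add, ha, hb, map_add, map_add]
  have key2 : ∀ (n : ℤ) (u : (TensorProduct (gradeZero 𝒜) S (L 0) ×
      TensorProduct (gradeZero 𝒜) S (L 1))),
      ((decompose ℳ' (Φ u)) n : M') = Φ (QF (𝒜 := 𝒜) L n u) := by
    rintro n ⟨u0, u1⟩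
    have hΦ : Φ (u0, u1) = LinearMap.liftBaseChange S ψ0 u0 +
        LinearMap.liftBaseChange S ψ1 u1 := rfl
    have hQ : QF (𝒜 := 𝒜) L n (u0, u1) =
        (LinearMap.rTensor (L 0) (compProj (𝒜 := 𝒜) n) u0,
         LinearMap.rTensor (L 1) (compProj (𝒜 := 𝒜) (n - 1)) u1) := rfl
    have hΦ2 : Φ (LinearMap.rTensor (L 0) (compProj (𝒜 := 𝒜) n) u0,
        LinearMap.rTensor (L 1) (compProj (𝒜 := 𝒜) (n - 1)) u1) =
        LinearMap.liftBaseChange S ψ0 (LinearMap.rTensor (L 0) (compProj (𝒜 := 𝒜) n) u0) +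
        LinearMap.liftBaseChange S ψ1
          (LinearMap.rTensor (L 1) (compProj (𝒜 := 𝒜) (n - 1)) u1) := rfl
    rw [hΦ, hQ, hΦ2, decompose_add, DirectSum.add_apply, AddSubgroup.coe_add, key2a, key2b]
  -- key3
  have key3 : ∀ (x : M) (n : ℤ),
      (Submodule.Quotient.mk ((decompose ℳ' (Φ (j x))) n : M') :
        M' ⧸ (Ideal.span ({W.t - 1} : Set S) • (⊤ : Submodule S M'))) =
        g (Submodule.Quotient.mk ((decompose ℳ x) n : M)) := by
    intro x n
    rw [key2, key1, piF_QF (𝒜 := 𝒜) ℳ L hℳsmul (hLsub 0) (hLsub 1) n (j x), hjx]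
  -- assemble ψ as the degree-zero part of Φ ∘ j
  let c : ∀ n : ℤ, (ℳ n) →+ (ℳ' n) := fun n =>
    { toFun := fun x => ⟨((decompose ℳ' (Φ (j (x : M)))) n : M'),
        ((decompose ℳ' (Φ (j (x : M)))) n).2⟩
      map_zero' := by ext; simp
      map_add' := by
        intro a b
        ext
        show ((decompose ℳ' (Φ (j ((a : M) + b)))) n : M') = _
        rw [map_add, map_add, decompose_add, DirectSum.add_apply] }
  let ψadd : M →+ M' :=
    ((decomposeAddEquiv ℳ').symm.toAddMonoidHom.comp
      ((DFinsupp.mapRange.addMonoidHom c).comp (decomposeAddEquiv ℳ).toAddMonoidHom))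
  have hψ : ∀ (n : ℤ) (x : M), x ∈ ℳ n → ψadd x = ((decompose ℳ' (Φ (j x))) n : M') := by
    intro n x hx
    show (decomposeAddEquiv ℳ').symm
      ((DFinsupp.mapRange.addMonoidHom c) ((decomposeAddEquiv ℳ) x)) = _
    have h1 : (decomposeAddEquiv ℳ) x = DirectSum.of (fun i => (ℳ i)) n ⟨x, hx⟩ :=
      DirectSum.decompose_coe ℳ (⟨x, hx⟩ : ℳ n)
    rw [h1]
    have h2 : (DFinsupp.mapRange.addMonoidHom c) (DirectSum.of (fun i => (ℳ i)) n ⟨x, hx⟩) =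
        DirectSum.of (fun i => (ℳ' i)) n (c n ⟨x, hx⟩) := by
      exact DFinsupp.mapRange_single (hf := fun i => (c i).map_zero)
    rw [h2]
    exact DirectSum.decompose_symm_of ℳ' (c n ⟨x, hx⟩)
  have hlin_hom : ∀ {k : ℤ} {s : S}, s ∈ 𝒜 k → ∀ x : M, ψadd (s • x) = s • ψadd x := by
    intro k s hs x
    induction x using DirectSum.Decomposition.inductionOn ℳ with
    | zero => rw [smul_zero, map_zero, smul_zero]
    | @homogeneous n z =>
        have h1 : s • (z : M) ∈ ℳ (k + n) := hℳsmul k n s hs _ z.2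
        rw [hψ (k + n) _ h1, hψ n _ z.2]
        have h2 : Φ (j (s • (z : M))) = s • Φ (j (z : M)) := by rw [map_smul, map_smul]
        rw [h2, decompose_smul_homog (𝒜 := 𝒜) ℳ' hℳ'smul hs (Φ (j (z : M))) n]
    | add a b ha hb => rw [smul_add, map_add, ha, hb, map_add, smul_add]
  have hlin : ∀ (s : S) (x : M), ψadd (s • x) = s • ψadd x := by
    intro s x
    induction s using DirectSum.Decomposition.inductionOn 𝒜 with
    | zero => rw [zero_smul, map_zero, zero_smul]
    | @homogeneous k a => exact hlin_hom a.2 x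
    | add s s' hs hs' => rw [add_smul, map_add, hs, hs', add_smul]
  let ψ : M →ₗ[S] M' := { toFun := ψadd, map_add' := ψadd.map_add, map_smul' := hlin }
  have hψapp : ∀ x : M, ψ x = ψadd x := fun x => rfl
  have hgrade : ∀ i : ℤ, ∀ x ∈ ℳ i, ψ x ∈ ℳ' i := by
    intro i x hx
    rw [hψapp, hψ i x hx]
    exact ((decompose ℳ' (Φ (j x))) i).2
  have hcomp : ∀ x : M, (Submodule.Quotient.mk (ψ x) :
      M' ⧸ (Ideal.span ({W.t - 1} : Set S) • (⊤ : Submodule S M'))) =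
      g (Submodule.Quotient.mk x) := by
    intro x
    induction x using DirectSum.Decomposition.inductionOn ℳ with
    | zero => rw [map_zero, Submodule.Quotient.mk_zero, Submodule.Quotient.mk_zero, map_zero]
    | @homogeneous n z =>
        rw [hψapp, hψ n _ z.2, key3, decompose_of_mem_same ℳ z.2]
    | add a b ha hb =>
        rw [map_add, Submodule.Quotient.mk_add, ha, hb, Submodule.Quotient.mk_add, map_add]
  -- uniqueness
  have huniqpair : ∀ ψ₁ ψ₂ : M →ₗ[S] M',
      ((∀ i : ℤ, ∀ x ∈ ℳ i, ψ₁ x ∈ ℳ' i) ∧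
        (∀ x : M, (Submodule.Quotient.mk (ψ₁ x) :
          M' ⧸ (Ideal.span ({W.t - 1} : Set S) • (⊤ : Submodule S M'))) =
          g (Submodule.Quotient.mk x))) →
      ((∀ i : ℤ, ∀ x ∈ ℳ i, ψ₂ x ∈ ℳ' i) ∧
        (∀ x : M, (Submodule.Quotient.mk (ψ₂ x) :
          M' ⧸ (Ideal.span ({W.t - 1} : Set S) • (⊤ : Submodule S M'))) =
          g (Submodule.Quotient.mk x))) → ψ₁ = ψ₂ := by
    rintro ψ₁ ψ₂ ⟨h1g, h1q⟩ ⟨h2g, h2q⟩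
    have heql : ∀ (i : ℤ), i ≤ 1 → ∀ x : M, x ∈ ℳ i → ψ₁ x = ψ₂ x := by
      intro i hi x hx
      refine uniq i hi _ _ (h1g i x hx) (h2g i x hx) ?_
      rw [h1q x, h2q x]
    have hker : ∀ (n : ℤ), ∀ x ∈ ℳ n, ψ₁ x = ψ₂ x := by
      intro n x hx
      have hxc : x ∈ AddSubgroup.closure
          {m : M | ∃ i : ℤ, ∃ s ∈ 𝒜 (n - i), ∃ y ∈ L i, m = s • y} := by
        rw [← hLgen n]; exact hx
      have hsub : x ∈ (LinearMap.ker (ψ₁ - ψ₂)).toAddSubgroup := by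
        refine AddSubgroup.closure_le _ |>.mpr ?_ hxc
        rintro m ⟨i, s, hs, y, hy, rfl⟩
        rw [SetLike.mem_coe, Submodule.mem_toAddSubgroup, LinearMap.mem_ker,
          LinearMap.sub_apply, sub_eq_zero, map_smul, map_smul]
        rcases eq_or_ne i 0 with rfl | hi0
        · rw [heql 0 (by omega) y (hLsub 0 hy)]
        rcases eq_or_ne i 1 with rfl | hi1
        · rw [heql 1 (by omega) y (hLsub 1 hy)]
        · have hy0 : y = 0 := by
            have := hLsupp i hi0 hi1
            simpa [this] using hy
          rw [hy0, map_zero, map_zero]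
      rw [Submodule.mem_toAddSubgroup, LinearMap.mem_ker, LinearMap.sub_apply,
        sub_eq_zero] at hsub
      exact hsub
    refine LinearMap.ext fun x => ?_
    induction x using DirectSum.Decomposition.inductionOn ℳ with
    | zero => rw [map_zero, map_zero]
    | @homogeneous n z => exact hker n _ z.2
    | add a b ha hb => rw [map_add, map_add, ha, hb]
  exact ⟨ψ, ⟨hgrade, hcomp⟩, fun ψ' h' => huniqpair ψ' ψ h' ⟨hgrade, hcomp⟩⟩
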